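/- Simplified form of the tradeoff recursion (Lemma 3.10): For each i and c, the optimization problem defining ĥ_i(c) admits an optimal solution in which the allocation and payment are constant functions of v_i; consequently ĥ_i(c) = max over Y ∈ [0,1] of E_{v_i∼f_i}[ĥ_{i+1}( Y·(v_i − E[v_i]) + c )] + Y·E[v_i], with the corresponding constant payment Y·E[v_i] − c. -/

import Mathlib

/-!
Lemma 3.10 (simplified form of the tradeoff recursion): for each period `i` and
bound `c`, the optimization problem defining `ĥ_i(c)` admits an optimal
solution whose allocation and payment are constant in the report; consequently
`ĥ_i(c) = max_{Y ∈ [0,1]} E_{v_i}[ĥ_{i+1}(Y (v_i - E[v_i]) + c)] + Y E[v_i]`,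
the corresponding constant payment being `Y E[v_i] - c`.
Periods are 0-indexed.
-/

open MeasureTheory

namespace Stmt9

open scoped Classical

variable {k : ℕ}

/-- Expectation of an extended-real-valued function, with value `⊥` when the
function is not a.e. finite and integrable. -/
noncomputable def eExp (μ : Measure ℝ) (φ : ℝ → EReal) : EReal :=
  if (∀ᵐ v ∂μ, ⊥ < φ v ∧ φ v < ⊤) ∧ Integrable (fun v => (φ v).toReal) μ then
    ((∫ v, (φ v).toReal ∂μ : ℝ) : EReal)
  else ⊥

/-- The extended-real-valued objective of the problem defining `ĥ_i(c)`. -/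
noncomputable def hObj (μ : Measure ℝ) (g : ℝ → EReal) (c : ℝ) (x p : ℝ → ℝ) : EReal :=
  if (∀ᵐ v ∂μ, ⊥ < g (v * x v - p v) ∧ g (v * x v - p v) < ⊤)
      ∧ Integrable (fun v => (g (v * x v - p v)).toReal) μ then
    ((∫ v, (g (v * x v - p v)).toReal ∂μ + c + p 0 : ℝ) : EReal)
  else ⊥

/-- The optimal value of the problem defining `ĥ_i(c)`. -/
noncomputable def hStep (μ : Measure ℝ) (g : ℝ → EReal) (c : ℝ) : EReal :=
  sSup {r : EReal | ∃ x p : ℝ → ℝ, (∀ v, x v ∈ Set.Icc (0 : ℝ) 1) ∧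
    (∀ v v', v * x v' - p v' ≤ v * x v - p v) ∧
    (∫ v, (v * x v - p v) ∂μ) = c ∧ r = hObj μ g c x p}

noncomputable def hHatAux (μ : Fin k → Measure ℝ) : ℕ → ℝ → EReal
  | 0 => fun c => if 0 ≤ c then (0 : EReal) else ⊥
  | (m + 1) => fun c =>
      if hm : m < k then
        hStep (μ ⟨k - (m + 1), by omega⟩) (hHatAux μ m) c
      else ⊥

/-- The cumulative tradeoff function `ĥ` of (0-indexed) period `i`. -/
noncomputable def hHat (μ : Fin k → Measure ℝ) (i : ℕ) : ℝ → EReal :=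
  hHatAux μ (k - i)

end Stmt9


namespace Stmt9x
open Stmt9
open MeasureTheory Set
open scoped ENNReal
open scoped Classical

structure NiceG (g : ℝ → EReal) (G : ℝ → ℝ) : Prop where
  mono : Monotone G
  conc : ConcaveOn ℝ (Set.Ici 0) G
  eqr : ∀ z, 0 ≤ z → g z = (G z : EReal)
  bot : ∀ z, z < 0 → g z = ⊥

variable {g : ℝ → EReal} {G : ℝ → ℝ}

lemma NiceG.lt_top (hg : NiceG g G) (z : ℝ) : g z < ⊤ := by
  rcases lt_or_ge z 0 with hz | hz
  · rw [hg.bot z hz]; exact bot_lt_top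
  · rw [hg.eqr z hz]; exact EReal.coe_lt_top _

lemma NiceG.bot_lt_iff (hg : NiceG g G) (z : ℝ) : ⊥ < g z ↔ 0 ≤ z := by
  constructor
  · intro hz
    by_contra hc
    rw [hg.bot z (lt_of_not_ge hc)] at hz
    exact lt_irrefl _ hz
  · intro hz; rw [hg.eqr z hz]; exact EReal.bot_lt_coe _

lemma NiceG.meas (hg : NiceG g G) : Measurable G := hg.mono.measurable

lemma NiceG.contOn (hg : NiceG g G) : ContinuousOn G (Set.Ioi 0) := by
  have h1 : ConvexOn ℝ (Set.Ioi 0) (-G) :=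
    (hg.conc.subset Set.Ioi_subset_Ici_self (convex_Ioi 0)).neg
  have := h1.continuousOn isOpen_Ioi
  simpa using this.neg

lemma norm_le_of_between {a x b : ℝ} (h1 : a ≤ x) (h2 : x ≤ b) : ‖x‖ ≤ max ‖a‖ ‖b‖ := by
  simp only [Real.norm_eq_abs]
  rcases le_or_gt 0 x with hx | hx
  · rw [abs_of_nonneg hx]
    exact le_max_of_le_right (le_trans h2 (le_abs_self b))
  · rw [abs_of_neg hx]
    exact le_max_of_le_left (le_trans (neg_le_neg h1) (neg_le_abs a))

/-- Supporting line at an interior point of a concave function on `Ici 0`. -/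
lemma exists_support (hc : ConcaveOn ℝ (Set.Ici 0) G) {w : ℝ} (hw : 0 < w) :
    ∃ K : ℝ, (∀ y, w < y → (G y - G w) / (y - w) ≤ K)
      ∧ (∀ z, 0 ≤ z → z < w → K ≤ (G w - G z) / (w - z)) := by
  set S : Set ℝ := {s | ∃ y, w < y ∧ s = (G y - G w) / (y - w)} with hS
  have hne : S.Nonempty := ⟨(G (w+1) - G w) / (w + 1 - w), ⟨w+1, by linarith, rfl⟩⟩
  have hbd : ∀ z, 0 ≤ z → z < w → ∀ s ∈ S, s ≤ (G w - G z) / (w - z) := by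
    rintro z hz hzw s ⟨y, hy, rfl⟩
    exact hc.slope_anti_adjacent hz (le_of_lt (lt_trans (lt_of_le_of_lt hz hzw) hy)) hzw hy
  have hbdd : BddAbove S := ⟨(G w - G 0) / (w - 0), fun s hs => hbd 0 le_rfl hw s hs⟩
  refine ⟨sSup S, fun y hy => le_csSup hbdd ⟨y, hy, rfl⟩, fun z hz hzw => csSup_le hne (hbd z hz hzw)⟩

lemma support_incr (hc : ConcaveOn ℝ (Set.Ici 0) G) {w K : ℝ} (hw : 0 < w)
    (hK1 : ∀ y, w < y → (G y - G w) / (y - w) ≤ K)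
    (hK2 : ∀ z, 0 ≤ z → z < w → K ≤ (G w - G z) / (w - z)) :
    ∀ z z', 0 ≤ z → z ≤ z' → z' ≤ w → K * (z' - z) ≤ G z' - G z := by
  intro z z' hz hzz hzw
  rcases eq_or_lt_of_le hzz with rfl | hlt
  · simp
  rcases eq_or_lt_of_le hzw with rfl | hlt'
  · have := hK2 z hz hlt
    rw [le_div_iff₀ (by linarith)] at this
    linarith
  · have h1 : K ≤ (G w - G z') / (w - z') := hK2 z' (le_trans hz hzz) hlt'
    have h2 : (G w - G z') / (w - z') ≤ (G z' - G z) / (z' - z) := by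
      have := hc.slope_anti_adjacent (x := z) (y := z') (z := w) hz (le_trans hz (by linarith)) hlt hlt'
      linarith [this]
    have := le_trans h1 h2
    rw [le_div_iff₀ (by linarith)] at this
    linarith

lemma support_decr (hc : ConcaveOn ℝ (Set.Ici 0) G) {w K : ℝ} (hw : 0 < w)
    (hK1 : ∀ y, w < y → (G y - G w) / (y - w) ≤ K)
    (hK2 : ∀ z, 0 ≤ z → z < w → K ≤ (G w - G z) / (w - z)) :
    ∀ z z', w ≤ z → z ≤ z' → G z' - G z ≤ K * (z' - z) := by
  intro z z' hwz hzz
  rcases eq_or_lt_of_le hzz with rfl | hlt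
  · simp
  rcases eq_or_lt_of_le hwz with rfl | hlt'
  · have := hK1 z' hlt
    rw [div_le_iff₀ (by linarith)] at this
    linarith
  · have h2 : (G z' - G z) / (z' - z) ≤ (G z - G w) / (z - w) := by
      have := hc.slope_anti_adjacent (x := w) (y := z) (z := z') hw.le
        (le_trans hw.le (by linarith)) hlt' hlt
      linarith [this]
    have h1 : (G z - G w) / (z - w) ≤ K := hK1 z hlt'
    have := le_trans h2 h1
    rw [div_le_iff₀ (by linarith)] at this
    linarith

/-- IC implies convexity of utility minus an affine function. -/
lemma IC_convex (x p : ℝ → ℝ) (hIC : ∀ v v', v * x v' - p v' ≤ v * x v - p v) (Y u0 : ℝ) :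
    ConvexOn ℝ Set.univ (fun v => (v * x v - p v) - (Y * v + u0)) := by
  refine ⟨convex_univ, ?_⟩
  intro a _ b _ θ θ' hθ hθ' hs
  simp only [smul_eq_mul]
  have h1' := mul_le_mul_of_nonneg_left (hIC a (θ * a + θ' * b)) hθ
  have h2' := mul_le_mul_of_nonneg_left (hIC b (θ * a + θ' * b)) hθ'
  have e : (θ * a + θ' * b) * x (θ * a + θ' * b) - p (θ * a + θ' * b)
      = θ * (a * x (θ * a + θ' * b) - p (θ * a + θ' * b))
        + θ' * (b * x (θ * a + θ' * b) - p (θ * a + θ' * b)) := by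
    linear_combination p (θ * a + θ' * b) * hs
  have e2 : Y * (θ * a + θ' * b) + u0 = θ * (Y * a + u0) + θ' * (Y * b + u0) := by
    linear_combination (- u0) * hs
  linarith [h1', h2', e, e2]

variable {ν : Measure ℝ} [IsProbabilityMeasure ν] {h : ℝ}

lemma hvInt (hconc : ∀ᵐ v ∂ν, v ∈ Set.Icc 0 h) : Integrable (fun v : ℝ => v) ν := by
  refine Integrable.mono' (integrable_const h) aestronglyMeasurable_id ?_
  filter_upwards [hconc] with v hv
  rw [Real.norm_eq_abs, abs_of_nonneg hv.1]; exact hv.2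

lemma bdd_integrable {f : ℝ → ℝ} (hm : AEStronglyMeasurable f ν) (B : ℝ)
    (hb : ∀ᵐ v ∂ν, ‖f v‖ ≤ B) : Integrable f ν :=
  Integrable.mono' (integrable_const B) hm hb

lemma m_nonneg (hconc : ∀ᵐ v ∂ν, v ∈ Set.Icc 0 h) : 0 ≤ ∫ v, v ∂ν :=
  integral_nonneg_of_ae (by filter_upwards [hconc] with v hv using hv.1)

lemma m_pos (hconc : ∀ᵐ v ∂ν, v ∈ Set.Icc 0 h) (hatom : ∀ a : ℝ, ν {a} = 0) :
    0 < ∫ v, v ∂ν := by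
  rcases lt_or_eq_of_le (m_nonneg hconc) with hm | hm
  · exact hm
  exfalso
  have hnn : (0 : ℝ → ℝ) ≤ᵐ[ν] fun v => v := by
    filter_upwards [hconc] with v hv using hv.1
  have h0 : (fun v : ℝ => v) =ᵐ[ν] 0 :=
    (integral_eq_zero_iff_of_nonneg_ae hnn (hvInt hconc)).mp hm.symm
  have hcmpl : ν {(0 : ℝ)}ᶜ = 0 := by
    have h2 := h0
    rw [Filter.EventuallyEq, ae_iff] at h2
    have : {(0:ℝ)}ᶜ = {a : ℝ | ¬ a = (0 : ℝ → ℝ) a} := by ext y; simp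
    rw [this]
    exact h2
  have h1 : (1 : ℝ≥0∞) ≤ 0 := by
    calc (1 : ℝ≥0∞) = ν Set.univ := (measure_univ).symm
    _ ≤ ν {(0:ℝ)} + ν {(0:ℝ)}ᶜ := by
        rw [← Set.union_compl_self {(0:ℝ)}]; exact measure_union_le _ _
    _ = 0 := by rw [hatom 0, hcmpl]; simp
  simp at h1

lemma integral_lin (hconc : ∀ᵐ v ∂ν, v ∈ Set.Icc 0 h) (Y K : ℝ) :
    ∫ v, (v * Y - K) ∂ν = (∫ v, v ∂ν) * Y - K := by
  rw [integral_sub ((hvInt hconc).mul_const Y) (integrable_const K),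
    integral_mul_const, integral_const]
  simp

/-- Integrability of `G ∘ ℓ_Y`. -/
lemma G_lin_integrable (hg : NiceG g G) (hconc : ∀ᵐ v ∂ν, v ∈ Set.Icc 0 h)
    {Y c : ℝ} (hY : Y ∈ Set.Icc (0:ℝ) 1) :
    Integrable (fun v => G (Y * (v - ∫ v, v ∂ν) + c)) ν := by
  have hM := m_nonneg hconc
  set M := ∫ v, v ∂ν with hMdef
  have hmeas : Measurable fun v => G (Y * (v - M) + c) :=
    hg.meas.comp (by fun_prop)
  refine Integrable.mono' (integrable_const (max ‖G (c - M)‖ ‖G (c + h)‖))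
    hmeas.aestronglyMeasurable ?_
  filter_upwards [hconc] with v hv
  have hlow : c - M ≤ Y * (v - M) + c := by nlinarith [hY.1, hY.2, hv.1, hv.2]
  have hup : Y * (v - M) + c ≤ c + h := by nlinarith [hY.1, hY.2, hv.1, hv.2]
  exact norm_le_of_between (hg.mono hlow) (hg.mono hup)

lemma eExp_eval (hg : NiceG g G) (hconc : ∀ᵐ v ∂ν, v ∈ Set.Icc 0 h)
    {Y c : ℝ} (hY : Y ∈ Set.Icc (0:ℝ) 1)
    (hae : ∀ᵐ v ∂ν, 0 ≤ Y * (v - ∫ v, v ∂ν) + c) :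
    eExp ν (fun v => g (Y * (v - ∫ v, v ∂ν) + c))
      = ((∫ v, G (Y * (v - ∫ v, v ∂ν) + c) ∂ν : ℝ) : EReal) := by
  set M := ∫ v, v ∂ν with hMdef
  have hcong : (fun v => (g (Y * (v - M) + c)).toReal)
      =ᵐ[ν] (fun v => G (Y * (v - M) + c)) := by
    filter_upwards [hae] with v hv
    rw [hg.eqr _ hv, EReal.toReal_coe]
  have hcond : (∀ᵐ v ∂ν, ⊥ < g (Y * (v - M) + c) ∧ g (Y * (v - M) + c) < ⊤)
      ∧ Integrable (fun v => (g (Y * (v - M) + c)).toReal) ν := by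
    constructor
    · filter_upwards [hae] with v hv
      exact ⟨(hg.bot_lt_iff _).2 hv, hg.lt_top _⟩
    · exact (G_lin_integrable hg hconc hY).congr hcong.symm
  rw [eExp, if_pos hcond, integral_congr_ae hcong]

omit [IsProbabilityMeasure ν] in
lemma eExp_bot (hg : NiceG g G)
    {Y c : ℝ} (hnae : ¬ ∀ᵐ v ∂ν, 0 ≤ Y * (v - ∫ v, v ∂ν) + c) :
    eExp ν (fun v => g (Y * (v - ∫ v, v ∂ν) + c)) = ⊥ := by
  rw [eExp, if_neg]
  rintro ⟨hcond, -⟩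
  exact hnae (by filter_upwards [hcond] with v hv using (hg.bot_lt_iff _).1 hv.1)

omit [IsProbabilityMeasure ν] in
lemma hObj_const (g : ℝ → EReal) (c Y : ℝ) :
    hObj ν g c (fun _ => Y) (fun _ => Y * (∫ v, v ∂ν) - c)
      = eExp ν (fun v => g (Y * (v - ∫ v, v ∂ν) + c)) + ((Y * ∫ v, v ∂ν : ℝ) : EReal) := by
  have hfun : ∀ v : ℝ, v * Y - (Y * (∫ v, v ∂ν) - c) = Y * (v - ∫ v, v ∂ν) + c :=
    fun v => by ring
  simp only [hObj, eExp, hfun]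
  split_ifs with h1
  · rw [← EReal.coe_add]
    congr 1
    ring
  · rw [EReal.bot_add]

lemma const_integral (hconc : ∀ᵐ v ∂ν, v ∈ Set.Icc 0 h) (Y c : ℝ) :
    ∫ v, (v * Y - (Y * (∫ v, v ∂ν) - c)) ∂ν = c := by
  rw [integral_sub ((hvInt hconc).mul_const Y) (integrable_const _),
    integral_mul_const, integral_const]
  simp [mul_comm]

def YSet (ν : Measure ℝ) (g : ℝ → EReal) (c : ℝ) : Set EReal :=
  {r : EReal | ∃ Y ∈ Set.Icc (0 : ℝ) 1,
      r = eExp ν (fun v => g (Y * (v - ∫ v, v ∂ν) + c)) + ((Y * ∫ v, v ∂ν : ℝ) : EReal)}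

set_option maxHeartbeats 1000000 in
lemma mech_le (hg : NiceG g G) (hconc : ∀ᵐ v ∂ν, v ∈ Set.Icc 0 h) (hh0 : 0 ≤ h)
    (hatom : ∀ a : ℝ, ν {a} = 0)
    {c : ℝ} (x p : ℝ → ℝ) (hx : ∀ v, x v ∈ Set.Icc (0:ℝ) 1)
    (hIC : ∀ v v', v * x v' - p v' ≤ v * x v - p v)
    (hci : (∫ v, (v * x v - p v) ∂ν) = c) :
    hObj ν g c x p ≤ sSup (YSet ν g c) := by
  rw [hObj]
  split_ifs with hcond
  swap
  · exact bot_le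
  obtain ⟨haebt, hIntg⟩ := hcond
  set u : ℝ → ℝ := fun v => v * x v - p v with hu
  have hci' : ∫ v, u v ∂ν = c := hci
  have hu0 : u 0 = - p 0 := by simp [hu]
  have humono : ∀ a b : ℝ, a ≤ b → u a ≤ u b := by
    intro a b hab
    have h1 := hIC b a
    have := (hx a).1
    simp only [hu]
    nlinarith [h1, (hx a).1]
  have hulip : ∀ a b : ℝ, a ≤ b → u b ≤ u a + (b - a) := by
    intro a b hab
    have h1 := hIC a b
    simp only [hu]
    nlinarith [h1, (hx b).2]
  have hucont : Continuous u := by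
    have : LipschitzWith 1 u := by
      refine LipschitzWith.of_dist_le_mul ?_
      intro a b
      rw [Real.dist_eq, Real.dist_eq, NNReal.coe_one, one_mul, abs_le]
      rcases le_total a b with hab | hab
      · have h1 := humono a b hab
        have h2 := hulip a b hab
        constructor <;> [skip; skip] <;> cases abs_cases (a - b) <;> linarith
      · have h1 := humono b a hab
        have h2 := hulip b a hab
        constructor <;> cases abs_cases (a - b) <;> linarith
    exact this.continuous
  have haeu : ∀ᵐ v ∂ν, 0 ≤ u v := by
    filter_upwards [haebt] with v hv
    exact (hg.bot_lt_iff _).1 hv.1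
  have hUInt : Integrable u ν := by
    refine Integrable.mono' (integrable_const (|u 0| + h)) hucont.aestronglyMeasurable ?_
    filter_upwards [hconc] with v hv
    have h1 := humono 0 v hv.1
    have h2 := hulip 0 v hv.1
    rw [Real.norm_eq_abs]
    cases abs_cases (u v) <;> cases abs_cases (u 0) <;> linarith [hv.2]
  set M : ℝ := ∫ v, v ∂ν with hMdef
  have hM : 0 < M := m_pos hconc hatom
  have hu0c : u 0 ≤ c := by
    have : ∫ (_ : ℝ), u 0 ∂ν ≤ ∫ v, u v ∂ν := by
      refine integral_mono_ae (integrable_const _) hUInt ?_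
      filter_upwards [hconc] with v hv using humono 0 v hv.1
    rw [integral_const] at this
    simp at this
    linarith [hci' ▸ this]
  have hcM : c ≤ u 0 + M := by
    have : ∫ v, u v ∂ν ≤ ∫ v, (u 0 + v) ∂ν := by
      refine integral_mono_ae hUInt ((integrable_const _).add (hvInt hconc)) ?_
      filter_upwards [hconc] with v hv using by linarith [hulip 0 v hv.1]
    rw [integral_add (integrable_const _) (hvInt hconc), integral_const] at this
    simp at this
    rw [hci'] at this
    linarith
  set Y : ℝ := (c - u 0) / M with hYdef
  have hY0 : 0 ≤ Y := div_nonneg (by linarith) hM.le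
  have hY1 : Y ≤ 1 := (div_le_one hM).2 (by linarith)
  have hYM : Y * M = c - u 0 := div_mul_cancel₀ _ hM.ne'
  set l : ℝ → ℝ := fun v => Y * v + u 0 with hldef
  have hlmono : Monotone l := by
    intro a b hab
    simp only [hldef]
    nlinarith
  have hlInt : Integrable l ν := ((hvInt hconc).const_mul Y).add (integrable_const _)
  have hlint : ∫ v, l v ∂ν = c := by
    simp only [hldef]
    rw [integral_add ((hvInt hconc).const_mul Y) (integrable_const _), integral_const_mul,
      integral_const]
    simp only [← hMdef]
    simp
    linarith [hYM]
  set d : ℝ → ℝ := fun v => u v - l v with hddef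
  have hd0 : d 0 = 0 := by simp [hddef, hldef]
  have hdconv : ConvexOn ℝ Set.univ d := IC_convex x p hIC Y (u 0)
  have hdInt : Integrable d ν := hUInt.sub hlInt
  have hdizero : ∫ v, d v ∂ν = 0 := by
    simp only [hddef]
    rw [integral_sub hUInt hlInt, hci', hlint]
    ring
  have hdcont : Continuous d := hucont.sub (by continuity)
  set T : Set ℝ := Set.Icc 0 h ∩ {v | d v ≤ 0} with hTdef
  have hTco : IsCompact T :=
    isCompact_Icc.of_isClosed_subset (isClosed_Icc.inter (isClosed_le hdcont continuous_const))
      Set.inter_subset_left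
  have hTne : T.Nonempty := ⟨0, ⟨le_rfl, hh0⟩, by simpa using hd0.le⟩
  set t : ℝ := sSup T with htdef
  have htT : t ∈ T := hTco.sSup_mem hTne
  have htd : d t ≤ 0 := htT.2
  have F1 : ∀ v, 0 ≤ v → v ≤ t → d v ≤ 0 := by
    intro v h0v hvt
    rcases eq_or_lt_of_le (le_trans h0v hvt) with ht0 | ht0
    · have : v = 0 := le_antisymm (ht0 ▸ hvt) h0v
      rw [this, hd0]
    · have hθ0 : 0 ≤ v / t := div_nonneg h0v ht0.le
      have hθ1 : v / t ≤ 1 := (div_le_one ht0).2 hvt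
      have h5 := hdconv.2 (Set.mem_univ t) (Set.mem_univ 0) (show (0:ℝ) ≤ v / t from hθ0)
        (show (0:ℝ) ≤ 1 - v / t by linarith) (show v / t + (1 - v / t) = 1 by ring)
      simp only [smul_eq_mul, mul_zero, add_zero] at h5
      rw [div_mul_cancel₀ _ ht0.ne'] at h5
      have h6 : v / t * d t ≤ 0 := mul_nonpos_of_nonneg_of_nonpos hθ0 htd
      calc d v ≤ v / t * d t + (1 - v / t) * d 0 := h5
      _ ≤ 0 := by rw [hd0]; linarith
  have F2 : ∀ v, v ≤ h → t < v → 0 < d v := by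
    intro v hvh htv
    by_contra hc2
    push_neg at hc2
    have hvT : v ∈ T := ⟨⟨le_trans htT.1.1 htv.le, hvh⟩, hc2⟩
    exact absurd (le_csSup hTco.bddAbove hvT) (not_le.2 htv)
  have hAne : ν {v | v ≤ t} ≠ 0 := by
    intro hA0
    have haet : ∀ᵐ v ∂ν, t < v := by
      rw [ae_iff]
      convert hA0 using 2
      ext v; simp
    have haed : ∀ᵐ v ∂ν, 0 ≤ d v := by
      filter_upwards [haet, hconc] with v hv hvc using (F2 v hvc.2 hv).le
    have hdz : d =ᵐ[ν] 0 := (integral_eq_zero_iff_of_nonneg_ae haed hdInt).mp hdizero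
    have : ∀ᵐ _v ∂ν, False := by
      filter_upwards [haet, hconc, hdz] with v hv hvc hdv
      exact absurd hdv (ne_of_gt (F2 v hvc.2 hv))
    obtain ⟨v, hv⟩ := this.exists
    exact hv
  obtain ⟨v₀, hv₀⟩ : ({v | v ≤ t} ∩ {v | v ∈ Set.Icc 0 h ∧ 0 ≤ u v}).Nonempty := by
    apply nonempty_of_measure_ne_zero (μ := ν)
    intro hz
    apply hAne
    have hGc : ν {v | ¬(v ∈ Set.Icc 0 h ∧ 0 ≤ u v)} = 0 := by
      rw [← ae_iff]
      exact (hconc.and haeu)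
    have := measure_le_inter_add_diff ν {v | v ≤ t} {v | v ∈ Set.Icc 0 h ∧ 0 ≤ u v}
    have hdiff : ν ({v | v ≤ t} \ {v | v ∈ Set.Icc 0 h ∧ 0 ≤ u v}) = 0 := by
      refine le_antisymm (le_trans (measure_mono ?_) hGc.le) (zero_le)
      intro w hw
      exact hw.2
    rw [hz, hdiff] at this
    simpa using this
  have hw0 : 0 ≤ l t := by
    have hd1 : d v₀ ≤ 0 := F1 v₀ hv₀.2.1.1 hv₀.1
    have : u v₀ ≤ l v₀ := by simpa [hddef, sub_nonpos] using hd1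
    have h2 := hlmono hv₀.1
    linarith [hv₀.2.2]
  have haele : ∀ᵐ v ∂ν, 0 ≤ l v := by
    filter_upwards [hconc, haeu] with v hv hvu
    rcases le_or_gt v t with hvt | hvt
    · have : d v ≤ 0 := F1 v hv.1 hvt
      simp only [hddef, sub_nonpos] at this
      linarith
    · linarith [hlmono hvt.le]
  have hGu_int : Integrable (fun v => G (u v)) ν := by
    refine Integrable.mono' (integrable_const (max ‖G (u 0)‖ ‖G (u 0 + h)‖))
      (hg.meas.comp hucont.measurable).aestronglyMeasurable ?_
    filter_upwards [hconc] with v hv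
    exact norm_le_of_between (hg.mono (humono 0 v hv.1))
      (hg.mono (by linarith [hulip 0 v hv.1, hv.2]))
  have hfun2 : (fun v => Y * (v - M) + c) = l := by
    funext v
    simp only [hldef]
    linarith [hYM]
  have hGl_int : Integrable (fun v => G (l v)) ν := by
    rw [← hfun2]
    exact G_lin_integrable (h := h) hg hconc ⟨hY0, hY1⟩
  have hkey : ∫ v, G (u v) ∂ν ≤ ∫ v, G (l v) ∂ν := by
    by_cases hw : l t = 0
    · have haed : ∀ᵐ v ∂ν, 0 ≤ d v := by
        filter_upwards [hconc, haeu] with v hv hvu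
        rcases le_or_gt v t with hvt | hvt
        · have : l v ≤ l t := hlmono hvt
          simp only [hddef]
          linarith [hw ▸ this]
        · exact (F2 v hv.2 hvt).le
      have hdz : d =ᵐ[ν] 0 := (integral_eq_zero_iff_of_nonneg_ae haed hdInt).mp hdizero
      refine le_of_eq (integral_congr_ae ?_)
      filter_upwards [hdz] with v hv
      have : u v = l v := by
        have := hv
        simp only [hddef, Pi.zero_apply] at this
        linarith
      rw [this]
    · have hwpos : 0 < l t := lt_of_le_of_ne hw0 (Ne.symm hw)
      obtain ⟨K, hK1, hK2⟩ := exists_support hg.conc hwpos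
      have haept : ∀ᵐ v ∂ν, G (u v) ≤ G (l v) + K * d v := by
        filter_upwards [hconc, haeu] with v hv hvu
        rcases le_or_gt v t with hvt | hvt
        · have hd1 : d v ≤ 0 := F1 v hv.1 hvt
          have hul : u v ≤ l v := by simpa [hddef, sub_nonpos] using hd1
          have hlw : l v ≤ l t := hlmono hvt
          have := support_incr hg.conc hwpos hK1 hK2 (u v) (l v) hvu hul hlw
          have he : K * d v = -(K * (l v - u v)) := by simp only [hddef]; ring
          linarith
        · have hd1 : 0 < d v := F2 v hv.2 hvt
          have hul : l v ≤ u v := by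
            have : 0 ≤ u v - l v := by simpa [hddef] using hd1.le
            linarith
          have hlw : l t ≤ l v := hlmono hvt.le
          have := support_decr hg.conc hwpos hK1 hK2 (l v) (u v) hlw hul
          have he : K * d v = K * (u v - l v) := by simp only [hddef]
          linarith
      calc ∫ v, G (u v) ∂ν ≤ ∫ v, (G (l v) + K * d v) ∂ν :=
            integral_mono_ae hGu_int (hGl_int.add (hdInt.const_mul K)) haept
      _ = ∫ v, G (l v) ∂ν + K * ∫ v, d v ∂ν := by
            rw [integral_add hGl_int (hdInt.const_mul K), integral_const_mul]
      _ = ∫ v, G (l v) ∂ν := by rw [hdizero]; ring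
  -- conclusion
  have hval : ∫ v, (g (u v)).toReal ∂ν = ∫ v, G (u v) ∂ν := by
    refine integral_congr_ae ?_
    filter_upwards [haeu] with v hv
    rw [hg.eqr _ hv, EReal.toReal_coe]
  have haele2 : ∀ᵐ v ∂ν, 0 ≤ Y * (v - M) + c := by
    filter_upwards [haele] with v hv
    rw [congrFun hfun2 v]
    exact hv
  have heval : eExp ν (fun v => g (Y * (v - ∫ v, v ∂ν) + c)) + ((Y * ∫ v, v ∂ν : ℝ) : EReal)
      = (((∫ v, G (l v) ∂ν) + Y * M : ℝ) : EReal) := by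
    rw [eExp_eval (h := h) hg hconc ⟨hY0, hY1⟩ haele2, ← EReal.coe_add]
    congr 2
    exact integral_congr_ae (Filter.Eventually.of_forall fun v =>
      congrArg G (congrFun hfun2 v))
  have hmem : eExp ν (fun v => g (Y * (v - ∫ v, v ∂ν) + c)) + ((Y * ∫ v, v ∂ν : ℝ) : EReal)
      ∈ YSet ν g c := ⟨Y, ⟨hY0, hY1⟩, rfl⟩
  refine le_trans ?_ (le_sSup hmem)
  rw [heval, EReal.coe_le_coe_iff]
  have hp0 : p 0 = - u 0 := by rw [hu0]; ring
  have : ∫ v, (g (v * x v - p v)).toReal ∂ν = ∫ v, G (u v) ∂ν := hval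
  rw [this, hp0]
  linarith [hkey, hYM]

lemma ae_eq_const_false (hatom : ∀ a : ℝ, ν {a} = 0) (a : ℝ)
    (hae : ∀ᵐ v ∂ν, v = a) : False := by
  have hc : ν {(a : ℝ)}ᶜ = 0 := by
    rw [ae_iff] at hae
    have : {(a:ℝ)}ᶜ = {v : ℝ | ¬ v = a} := by ext y; simp
    rw [this]; exact hae
  have h1 : (1 : ℝ≥0∞) ≤ 0 := by
    calc (1 : ℝ≥0∞) = ν Set.univ := (measure_univ).symm
    _ ≤ ν {(a:ℝ)} + ν {(a:ℝ)}ᶜ := by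
        rw [← Set.union_compl_self {(a:ℝ)}]; exact measure_union_le _ _
    _ = 0 := by rw [hatom a, hc]; simp
  simp at h1

lemma ae_ne_of_atom (hatom : ∀ a : ℝ, ν {a} = 0) (a : ℝ) : ∀ᵐ v ∂ν, v ≠ a := by
  rw [ae_iff]
  convert hatom a using 2
  ext y; simp

/-- The representation `hStep = sSup YSet`. -/
lemma hStep_eq (hg : NiceG g G) (hconc : ∀ᵐ v ∂ν, v ∈ Set.Icc 0 h) (hh0 : 0 ≤ h)
    (hatom : ∀ a : ℝ, ν {a} = 0) (c : ℝ) :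
    hStep ν g c = sSup (YSet ν g c) := by
  refine le_antisymm (sSup_le ?_) (sSup_le ?_)
  · rintro r ⟨x, p, hx, hIC, hci, rfl⟩
    exact mech_le (h := h) hg hconc hh0 hatom x p hx hIC hci
  · rintro r ⟨Y, hY, rfl⟩
    refine le_sSup ?_
    exact ⟨fun _ => Y, fun _ => Y * (∫ v, v ∂ν) - c, fun v => hY, fun v v' => le_refl _,
      const_integral (h := h) hconc Y c, (hObj_const g c Y).symm⟩

lemma lin_integral (hconc : ∀ᵐ v ∂ν, v ∈ Set.Icc 0 h) (Y c : ℝ) :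
    ∫ v, (Y * (v - ∫ v, v ∂ν) + c) ∂ν = c := by
  have he : (fun v : ℝ => Y * (v - ∫ v, v ∂ν) + c)
      = (fun v : ℝ => v * Y - (Y * (∫ v, v ∂ν) - c)) := by
    funext v; ring
  rw [he]
  exact const_integral (h := h) hconc Y c

/-- Attainment of the supremum over `Y ∈ [0,1]`. -/
lemma exists_max (hg : NiceG g G) (hconc : ∀ᵐ v ∂ν, v ∈ Set.Icc 0 h) (hh0 : 0 ≤ h)
    (hatom : ∀ a : ℝ, ν {a} = 0) (c : ℝ) :
    ∃ Y ∈ Set.Icc (0:ℝ) 1,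
      eExp ν (fun v => g (Y * (v - ∫ v, v ∂ν) + c)) + ((Y * ∫ v, v ∂ν : ℝ) : EReal)
        = sSup (YSet ν g c) := by
  have hM : 0 < ∫ v, v ∂ν := m_pos hconc hatom
  by_cases hc : 0 ≤ c
  swap
  · push_neg at hc
    have hall : ∀ Y : ℝ, eExp ν (fun v => g (Y * (v - ∫ v, v ∂ν) + c)) = ⊥ := by
      intro Y
      refine eExp_bot hg ?_
      intro hae
      have h0c : 0 ≤ c := (lin_integral hconc Y c) ▸ integral_nonneg_of_ae hae
      linarith
    have hbot : sSup (YSet ν g c) = ⊥ := by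
      refine le_antisymm (sSup_le ?_) bot_le
      rintro r ⟨Y, hY, rfl⟩
      rw [hall Y, EReal.bot_add]
    exact ⟨0, ⟨le_rfl, zero_le_one⟩, by rw [hall 0, EReal.bot_add, hbot]⟩
  set K : Set ℝ := {Y | Y ∈ Set.Icc (0:ℝ) 1 ∧ ∀ᵐ v ∂ν, 0 ≤ Y * (v - ∫ v, v ∂ν) + c}
    with hKdef
  have h0K : (0:ℝ) ∈ K := by
    refine ⟨⟨le_rfl, zero_le_one⟩, ?_⟩
    filter_upwards with v
    simpa using hc
  have hKdc : ∀ Y' ∈ K, ∀ Z, 0 ≤ Z → Z ≤ Y' → Z ∈ K := by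
    rintro Y' ⟨hY'I, hY'ae⟩ Z hZ0 hZY
    refine ⟨⟨hZ0, le_trans hZY hY'I.2⟩, ?_⟩
    filter_upwards [hY'ae] with v hv
    rcases eq_or_lt_of_le (le_trans hZ0 hZY) with h0 | h0
    · have hZz : Z = 0 := le_antisymm (h0 ▸ hZY) hZ0
      simpa [hZz] using hc
    · have hcomb : Z * (v - ∫ v, v ∂ν) + c
          = (Z / Y') * (Y' * (v - ∫ v, v ∂ν) + c) + (1 - Z / Y') * c := by
        field_simp
        ring
      rw [hcomb]
      have h1 : 0 ≤ Z / Y' := div_nonneg hZ0 h0.le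
      have h2 : Z / Y' ≤ 1 := (div_le_one h0).2 hZY
      nlinarith [hv, hc]
  have hKbdd : BddAbove K := ⟨1, fun Y hY => hY.1.2⟩
  have hYm0 : 0 ≤ sSup K := le_csSup hKbdd h0K
  have hYm1 : sSup K ≤ 1 := csSup_le ⟨0, h0K⟩ (fun Y hY => hY.1.2)
  have hYmK : sSup K ∈ K := by
    rcases eq_or_lt_of_le hYm0 with h0 | h0
    · rw [← h0]; exact h0K
    · refine ⟨⟨hYm0, hYm1⟩, ?_⟩
      have hseq : ∀ n : ℕ, (1 - 1/(n+1 : ℝ)) * sSup K ∈ K := by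
        intro n
        have h1n : (0:ℝ) < 1/(n+1 : ℝ) := by positivity
        have h1n' : (1:ℝ)/(n+1 : ℝ) ≤ 1 := by
          rw [div_le_one (by positivity)]
          simp
        have h2 : (1 - 1/(n+1 : ℝ)) * sSup K < sSup K := by nlinarith
        obtain ⟨Y', hY'K, hY'⟩ := exists_lt_of_lt_csSup ⟨0, h0K⟩ h2
        exact hKdc Y' hY'K _ (by nlinarith) hY'.le
      have hall := ae_all_iff.2 (fun n => (hseq n).2)
      filter_upwards [hall] with v hv
      have hlim : Filter.Tendsto
          (fun n : ℕ => (1 - 1/(n+1 : ℝ)) * sSup K * (v - ∫ v, v ∂ν) + c)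
          Filter.atTop (nhds (sSup K * (v - ∫ v, v ∂ν) + c)) := by
        have h1 : Filter.Tendsto (fun n : ℕ => 1 - 1/(n+1 : ℝ)) Filter.atTop (nhds 1) := by
          have : Filter.Tendsto (fun n : ℕ => 1 / ((n : ℝ) + 1)) Filter.atTop (nhds 0) :=
            tendsto_one_div_add_atTop_nhds_zero_nat
          have h2 := Filter.Tendsto.const_sub (1:ℝ) this
          simpa using h2
        have h3 := ((h1.mul_const (sSup K)).mul_const (v - ∫ v, v ∂ν)).add_const c
        simpa using h3
      exact ge_of_tendsto hlim (Filter.Eventually.of_forall hv)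
  have hKIcc : K = Set.Icc 0 (sSup K) :=
    Set.Subset.antisymm (fun Y hY => ⟨hY.1.1, le_csSup hKbdd hY⟩)
      (fun Z hZ => hKdc _ hYmK Z hZ.1 hZ.2)
  -- continuity of the real objective on K
  set φ : ℝ → ℝ := fun Y => (∫ v, G (Y * (v - ∫ v, v ∂ν) + c) ∂ν) + Y * ∫ v, v ∂ν
    with hφdef
  have hφcont : ContinuousOn φ (Set.Icc 0 (sSup K)) := by
    rcases eq_or_lt_of_le hYm0 with h0 | h0
    · rw [← h0, Set.Icc_self]
      intro Y hY
      rw [Set.mem_singleton_iff] at hY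
      subst hY
      exact continuousWithinAt_singleton
    · have hcpos : 0 < c := by
        rcases lt_or_eq_of_le hc with hcpos | hc0
        · exact hcpos
        · exfalso
          have hae := hYmK.2
          have haenn : ∀ᵐ v ∂ν, 0 ≤ v - ∫ v, v ∂ν := by
            filter_upwards [hae] with v hv
            rw [← hc0] at hv
            simp only [add_zero] at hv
            exact nonneg_of_mul_nonneg_right hv h0
          have hiz : ∫ v, (v - ∫ v, v ∂ν) ∂ν = 0 := by
            rw [integral_sub (hvInt hconc) (integrable_const _), integral_const]
            simp
          have hz := (integral_eq_zero_iff_of_nonneg_ae haenn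
            ((hvInt hconc).sub (integrable_const _))).mp hiz
          refine ae_eq_const_false hatom (∫ v, v ∂ν) ?_
          filter_upwards [hz] with v hv
          simpa [sub_eq_zero] using hv
      intro Y₀ hY₀
      refine ContinuousWithinAt.add ?_ ((continuous_id.mul continuous_const).continuousWithinAt)
      have haegood : ∀ᵐ v ∂ν, v ∈ Set.Icc 0 h ∧ v ≠ (∫ v, v ∂ν) - c / sSup K
          ∧ 0 ≤ sSup K * (v - ∫ v, v ∂ν) + c :=
        (hconc.and ((ae_ne_of_atom hatom _).and hYmK.2))
      refine continuousWithinAt_of_dominated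
        (Filter.Eventually.of_forall fun Y =>
          (hg.meas.comp (by fun_prop)).aestronglyMeasurable)
        ?_ (integrable_const (max ‖G (c - ∫ v, v ∂ν)‖ ‖G (c + h)‖)) ?_
      · refine Filter.eventually_of_mem self_mem_nhdsWithin fun Y hYK => ?_
        have hYI : Y ∈ Set.Icc (0:ℝ) 1 := ⟨hYK.1, le_trans hYK.2 hYm1⟩
        filter_upwards [hconc] with v hv
        have hMnn : 0 ≤ ∫ v, v ∂ν := hM.le
        have hlow : c - ∫ v, v ∂ν ≤ Y * (v - ∫ v, v ∂ν) + c := by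
          nlinarith [hYI.1, hYI.2, hv.1, hv.2]
        have hup : Y * (v - ∫ v, v ∂ν) + c ≤ c + h := by
          nlinarith [hYI.1, hYI.2, hv.1, hv.2]
        exact norm_le_of_between (hg.mono hlow) (hg.mono hup)
      · filter_upwards [haegood] with v hv
        have hpos : ∀ Z ∈ Set.Icc 0 (sSup K), 0 < Z * (v - ∫ v, v ∂ν) + c := by
          intro Z hZ
          have hne : sSup K * (v - ∫ v, v ∂ν) + c ≠ 0 := by
            intro h0'
            apply hv.2.1
            have : v - ∫ v, v ∂ν = - (c / sSup K) := by
              field_simp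
              nlinarith [h0']
            linarith [this]
          have h1 : 0 < sSup K * (v - ∫ v, v ∂ν) + c := lt_of_le_of_ne hv.2.2 (Ne.symm hne)
          have hcomb : Z * (v - ∫ v, v ∂ν) + c
              = (Z / sSup K) * (sSup K * (v - ∫ v, v ∂ν) + c) + (1 - Z / sSup K) * c := by
            field_simp
            ring
          rw [hcomb]
          have hz1 : 0 ≤ Z / sSup K := div_nonneg hZ.1 h0.le
          have hz2 : Z / sSup K ≤ 1 := (div_le_one h0).2 hZ.2
          rcases eq_or_lt_of_le hz2 with he | hlt
          · rw [he]
            simp only [sub_self, zero_mul, add_zero, one_mul]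
            exact h1
          · nlinarith [h1, hcpos]
        have hca : ContinuousAt (fun Y : ℝ => G (Y * (v - ∫ v, v ∂ν) + c)) Y₀ := by
          refine ContinuousAt.comp ?_ (by fun_prop)
          exact hg.contOn.continuousAt (isOpen_Ioi.mem_nhds (hpos Y₀ hY₀))
        exact hca.continuousWithinAt
  obtain ⟨Ys, hYsK, hYsmax⟩ := (isCompact_Icc).exists_isMaxOn
    ⟨0, Set.left_mem_Icc.2 hYm0⟩ hφcont
  have hYsIcc : Ys ∈ Set.Icc (0:ℝ) 1 := ⟨hYsK.1, le_trans hYsK.2 hYm1⟩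
  have hYsKmem : Ys ∈ K := hKIcc ▸ hYsK
  have hPsi : ∀ Y ∈ K,
      eExp ν (fun v => g (Y * (v - ∫ v, v ∂ν) + c)) + ((Y * ∫ v, v ∂ν : ℝ) : EReal)
        = ((φ Y : ℝ) : EReal) := by
    intro Y hYK
    rw [eExp_eval (h := h) hg hconc ⟨hYK.1.1, hYK.1.2⟩ hYK.2, ← EReal.coe_add]
  refine ⟨Ys, hYsIcc, ?_⟩
  rw [hPsi Ys hYsKmem]
  refine le_antisymm (le_sSup ⟨Ys, hYsIcc, (hPsi Ys hYsKmem).symm⟩) (sSup_le ?_)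
  rintro r ⟨Y, hY, rfl⟩
  by_cases hYK : Y ∈ K
  · rw [hPsi Y hYK]
    exact EReal.coe_le_coe_iff.2 (hYsmax (hKIcc ▸ hYK))
  · have hb : eExp ν (fun v => g (Y * (v - ∫ v, v ∂ν) + c)) = ⊥ :=
      eExp_bot hg (fun hae => hYK ⟨hY, hae⟩)
    rw [hb, EReal.bot_add]
    exact bot_le

lemma hStep_bot (hg : NiceG g G) (hconc : ∀ᵐ v ∂ν, v ∈ Set.Icc 0 h) (hh0 : 0 ≤ h)
    (hatom : ∀ a : ℝ, ν {a} = 0) {c : ℝ} (hc : c < 0) : hStep ν g c = ⊥ := by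
  rw [hStep_eq hg hconc hh0 hatom c]
  refine le_antisymm (sSup_le ?_) bot_le
  rintro r ⟨Y, hY, rfl⟩
  have hb : eExp ν (fun v => g (Y * (v - ∫ v, v ∂ν) + c)) = ⊥ := by
    refine eExp_bot hg ?_
    intro hae
    have h0c : 0 ≤ c := (lin_integral (h := h) hconc Y c) ▸ integral_nonneg_of_ae hae
    linarith
  rw [hb, EReal.bot_add]

lemma psi_zero (hg : NiceG g G) (hconc : ∀ᵐ v ∂ν, v ∈ Set.Icc 0 h) {c : ℝ} (hc : 0 ≤ c) :
    eExp ν (fun v => g ((0:ℝ) * (v - ∫ v, v ∂ν) + c)) + (((0:ℝ) * ∫ v, v ∂ν : ℝ) : EReal)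
      = ((G c : ℝ) : EReal) := by
  rw [eExp_eval (h := h) hg hconc ⟨le_rfl, zero_le_one⟩
    (by filter_upwards with v; simpa using hc), ← EReal.coe_add]
  congr 1
  have he : (fun v : ℝ => G ((0:ℝ) * (v - ∫ v, v ∂ν) + c)) = fun _ : ℝ => G c := by
    funext v; norm_num
  rw [he, integral_const]
  simp

lemma hStep_ge_G (hg : NiceG g G) (hconc : ∀ᵐ v ∂ν, v ∈ Set.Icc 0 h) (hh0 : 0 ≤ h)
    (hatom : ∀ a : ℝ, ν {a} = 0) {c : ℝ} (hc : 0 ≤ c) :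
    ((G c : ℝ) : EReal) ≤ hStep ν g c := by
  rw [hStep_eq hg hconc hh0 hatom c]
  exact le_sSup ⟨0, ⟨le_rfl, zero_le_one⟩, (psi_zero hg hconc hc).symm⟩

lemma hStep_le_bound (hg : NiceG g G) (hconc : ∀ᵐ v ∂ν, v ∈ Set.Icc 0 h) (hh0 : 0 ≤ h)
    (hatom : ∀ a : ℝ, ν {a} = 0) (c : ℝ) :
    hStep ν g c ≤ ((G (c + h) + ∫ v, v ∂ν : ℝ) : EReal) := by
  rw [hStep_eq hg hconc hh0 hatom c]
  refine sSup_le ?_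
  rintro r ⟨Y, hY, rfl⟩
  by_cases hae : ∀ᵐ v ∂ν, 0 ≤ Y * (v - ∫ v, v ∂ν) + c
  · rw [eExp_eval (h := h) hg hconc hY hae, ← EReal.coe_add, EReal.coe_le_coe_iff]
    have hM : 0 < ∫ v, v ∂ν := m_pos hconc hatom
    have h1 : ∫ v, G (Y * (v - ∫ v, v ∂ν) + c) ∂ν ≤ G (c + h) := by
      have h2 : ∫ v, G (Y * (v - ∫ v, v ∂ν) + c) ∂ν ≤ ∫ _, G (c + h) ∂ν := by
        refine integral_mono_ae (G_lin_integrable (h := h) hg hconc hY)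
          (integrable_const _) ?_
        filter_upwards [hconc] with v hv
        refine hg.mono ?_
        nlinarith [hY.1, hY.2, hv.1, hv.2, hM.le]
      rw [integral_const] at h2
      simpa using h2
    nlinarith [hY.1, hY.2, hM.le, h1]
  · rw [eExp_bot hg hae, EReal.bot_add]
    exact bot_le

lemma hStep_real (hg : NiceG g G) (hconc : ∀ᵐ v ∂ν, v ∈ Set.Icc 0 h) (hh0 : 0 ≤ h)
    (hatom : ∀ a : ℝ, ν {a} = 0) {c : ℝ} (hc : 0 ≤ c) :
    hStep ν g c = (((hStep ν g c).toReal : ℝ) : EReal) := by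
  have h1 : ⊥ < hStep ν g c :=
    lt_of_lt_of_le (EReal.bot_lt_coe _) (hStep_ge_G hg hconc hh0 hatom hc)
  have h2 : hStep ν g c < ⊤ :=
    lt_of_le_of_lt (hStep_le_bound hg hconc hh0 hatom c) (EReal.coe_lt_top _)
  exact (EReal.coe_toReal h2.ne h1.ne').symm

lemma hStep_mono (hg : NiceG g G) (hconc : ∀ᵐ v ∂ν, v ∈ Set.Icc 0 h) (hh0 : 0 ≤ h)
    (hatom : ∀ a : ℝ, ν {a} = 0) {c₁ c₂ : ℝ} (hcc : c₁ ≤ c₂) :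
    hStep ν g c₁ ≤ hStep ν g c₂ := by
  rw [hStep_eq hg hconc hh0 hatom c₁, hStep_eq hg hconc hh0 hatom c₂]
  refine sSup_le ?_
  rintro r ⟨Y, hY, rfl⟩
  by_cases hae : ∀ᵐ v ∂ν, 0 ≤ Y * (v - ∫ v, v ∂ν) + c₁
  · have hae₂ : ∀ᵐ v ∂ν, 0 ≤ Y * (v - ∫ v, v ∂ν) + c₂ := by
      filter_upwards [hae] with v hv; linarith
    refine le_trans ?_ (le_sSup ⟨Y, hY, rfl⟩)
    rw [eExp_eval (h := h) hg hconc hY hae, eExp_eval (h := h) hg hconc hY hae₂,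
      ← EReal.coe_add, ← EReal.coe_add, EReal.coe_le_coe_iff]
    have := integral_mono_ae (G_lin_integrable (h := h) hg hconc hY (c := c₁))
      (G_lin_integrable (h := h) hg hconc hY (c := c₂)) ?_
    · linarith [this]
    · filter_upwards with v
      exact hg.mono (by linarith)
  · rw [eExp_bot hg hae, EReal.bot_add]
    exact bot_le

lemma nice_hStep (hg : NiceG g G) (hconc : ∀ᵐ v ∂ν, v ∈ Set.Icc 0 h) (hh0 : 0 ≤ h)
    (hatom : ∀ a : ℝ, ν {a} = 0) :
    NiceG (hStep ν g) (fun c => (hStep ν g (max c 0)).toReal) := by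
  have hreal := fun {c} (hc : (0:ℝ) ≤ c) => hStep_real hg hconc hh0 hatom (c := c) hc
  -- the attained representation at nonnegative budgets
  have hattain : ∀ c : ℝ, 0 ≤ c → ∃ Y ∈ Set.Icc (0:ℝ) 1,
      (∀ᵐ v ∂ν, 0 ≤ Y * (v - ∫ v, v ∂ν) + c) ∧
      hStep ν g c = ((∫ v, G (Y * (v - ∫ v, v ∂ν) + c) ∂ν + Y * ∫ v, v ∂ν : ℝ) : EReal) := by
    intro c hc
    obtain ⟨Y, hY, hYeq⟩ := exists_max (h := h) hg hconc hh0 hatom c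
    rw [← hStep_eq hg hconc hh0 hatom c] at hYeq
    have hae : ∀ᵐ v ∂ν, 0 ≤ Y * (v - ∫ v, v ∂ν) + c := by
      by_contra hnae
      rw [eExp_bot hg hnae, EReal.bot_add] at hYeq
      have := hStep_ge_G hg hconc hh0 hatom hc
      rw [← hYeq] at this
      exact absurd this (by simp)
    refine ⟨Y, hY, hae, ?_⟩
    rw [← hYeq, eExp_eval (h := h) hg hconc hY hae, ← EReal.coe_add]
  constructor
  · -- monotone
    intro a b hab
    have h1 : max a 0 ≤ max b 0 := max_le_max hab le_rfl
    have h2 := hStep_mono hg hconc hh0 hatom h1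
    have ha := hreal (le_max_right a 0)
    have hb := hreal (le_max_right b 0)
    rw [ha, hb, EReal.coe_le_coe_iff] at h2
    exact h2
  · -- concave
    refine ⟨convex_Ici 0, ?_⟩
    intro c₁ hc₁ c₂ hc₂ θ θ' hθ hθ' hs
    simp only [smul_eq_mul]
    have hc₁' : (0:ℝ) ≤ c₁ := hc₁
    have hc₂' : (0:ℝ) ≤ c₂ := hc₂
    obtain ⟨Y₁, hY₁, hae₁, heq₁⟩ := hattain c₁ hc₁'
    obtain ⟨Y₂, hY₂, hae₂, heq₂⟩ := hattain c₂ hc₂'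
    have hcbar : 0 ≤ θ * c₁ + θ' * c₂ := by
      have := mul_nonneg hθ hc₁'
      have := mul_nonneg hθ' hc₂'
      linarith
    have hYbar : θ * Y₁ + θ' * Y₂ ∈ Set.Icc (0:ℝ) 1 := by
      constructor
      · have := mul_nonneg hθ hY₁.1
        have := mul_nonneg hθ' hY₂.1
        linarith
      · nlinarith [hY₁.1, hY₁.2, hY₂.1, hY₂.2]
    have haebar : ∀ᵐ v ∂ν, 0 ≤ (θ * Y₁ + θ' * Y₂) * (v - ∫ v, v ∂ν) + (θ * c₁ + θ' * c₂) := by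
      filter_upwards [hae₁, hae₂] with v hv1 hv2
      have he : (θ * Y₁ + θ' * Y₂) * (v - ∫ v, v ∂ν) + (θ * c₁ + θ' * c₂)
          = θ * (Y₁ * (v - ∫ v, v ∂ν) + c₁) + θ' * (Y₂ * (v - ∫ v, v ∂ν) + c₂) := by ring
      rw [he]
      have := mul_nonneg hθ hv1
      have := mul_nonneg hθ' hv2
      linarith
    have hkey : θ * (∫ v, G (Y₁ * (v - ∫ v, v ∂ν) + c₁) ∂ν)
        + θ' * (∫ v, G (Y₂ * (v - ∫ v, v ∂ν) + c₂) ∂ν)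
        ≤ ∫ v, G ((θ * Y₁ + θ' * Y₂) * (v - ∫ v, v ∂ν) + (θ * c₁ + θ' * c₂)) ∂ν := by
      have hintsum : ∫ v, (θ * G (Y₁ * (v - ∫ v, v ∂ν) + c₁)
          + θ' * G (Y₂ * (v - ∫ v, v ∂ν) + c₂)) ∂ν
          = θ * (∫ v, G (Y₁ * (v - ∫ v, v ∂ν) + c₁) ∂ν)
            + θ' * (∫ v, G (Y₂ * (v - ∫ v, v ∂ν) + c₂) ∂ν) := by
        rw [integral_add ((G_lin_integrable (h := h) hg hconc hY₁).const_mul θ)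
          ((G_lin_integrable (h := h) hg hconc hY₂).const_mul θ'),
          integral_const_mul, integral_const_mul]
      rw [← hintsum]
      refine integral_mono_ae
        (((G_lin_integrable (h := h) hg hconc hY₁).const_mul θ).add
          ((G_lin_integrable (h := h) hg hconc hY₂).const_mul θ'))
        (G_lin_integrable (h := h) hg hconc hYbar) ?_
      filter_upwards [hae₁, hae₂] with v hv1 hv2
      have hcc := hg.conc.2 (Set.mem_Ici.2 hv1) (Set.mem_Ici.2 hv2) hθ hθ' hs
      simp only [smul_eq_mul] at hcc
      have he : θ * (Y₁ * (v - ∫ v, v ∂ν) + c₁) + θ' * (Y₂ * (v - ∫ v, v ∂ν) + c₂)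
          = (θ * Y₁ + θ' * Y₂) * (v - ∫ v, v ∂ν) + (θ * c₁ + θ' * c₂) := by ring
      rw [he] at hcc
      exact hcc
    have hup : ((∫ v, G ((θ * Y₁ + θ' * Y₂) * (v - ∫ v, v ∂ν) + (θ * c₁ + θ' * c₂)) ∂ν
        + (θ * Y₁ + θ' * Y₂) * ∫ v, v ∂ν : ℝ) : EReal) ≤ hStep ν g (θ * c₁ + θ' * c₂) := by
      rw [hStep_eq hg hconc hh0 hatom]
      refine le_sSup ⟨θ * Y₁ + θ' * Y₂, hYbar, ?_⟩
      rw [eExp_eval (h := h) hg hconc hYbar haebar, ← EReal.coe_add]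
    have hfin := hreal hcbar
    rw [hfin, EReal.coe_le_coe_iff] at hup
    have hmax : max (θ * c₁ + θ' * c₂) 0 = θ * c₁ + θ' * c₂ := max_eq_left hcbar
    have hmax1 : max c₁ 0 = c₁ := max_eq_left hc₁
    have hmax2 : max c₂ 0 = c₂ := max_eq_left hc₂
    rw [hmax, hmax1, hmax2]
    have ht1 : (hStep ν g c₁).toReal = ∫ v, G (Y₁ * (v - ∫ v, v ∂ν) + c₁) ∂ν + Y₁ * ∫ v, v ∂ν := by
      rw [heq₁]; exact EReal.toReal_coe _
    have ht2 : (hStep ν g c₂).toReal = ∫ v, G (Y₂ * (v - ∫ v, v ∂ν) + c₂) ∂ν + Y₂ * ∫ v, v ∂ν := by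
      rw [heq₂]; exact EReal.toReal_coe _
    rw [ht1, ht2]
    nlinarith [hkey, hup]
  · -- eqr
    intro z hz
    have := hreal hz
    rw [this]
    congr 1
    rw [max_eq_left hz]
  · -- bot
    intro z hz
    exact hStep_bot hg hconc hh0 hatom hz


/-- Main one-step result. -/
lemma step_main {ν : Measure ℝ} [IsProbabilityMeasure ν] {h : ℝ} {g : ℝ → EReal} {G : ℝ → ℝ}
    (hg : NiceG g G) (hconc : ∀ᵐ v ∂ν, v ∈ Set.Icc 0 h) (hh0 : 0 ≤ h)
    (hatom : ∀ a : ℝ, ν {a} = 0) (c : ℝ) :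
    (∃ Y ∈ Set.Icc (0 : ℝ) 1,
        (∫ v, (v * Y - (Y * (∫ v, v ∂ν) - c)) ∂ν) = c ∧
        hObj ν g c (fun _ => Y) (fun _ => Y * (∫ v, v ∂ν) - c) = hStep ν g c)
      ∧ hStep ν g c = sSup (YSet ν g c) := by
  have hse := hStep_eq hg hconc hh0 hatom c
  refine ⟨?_, hse⟩
  obtain ⟨Y, hY, heq⟩ := exists_max (h := h) hg hconc hh0 hatom c
  refine ⟨Y, hY, const_integral (h := h) hconc Y c, ?_⟩
  rw [hObj_const g c Y, heq, ← hse]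

lemma density_conc (f : ℝ → ℝ) (h : ℝ) (hfsupp : ∀ t, t ∉ Set.Icc 0 h → f t = 0) :
    ∀ᵐ v ∂(MeasureTheory.volume.withDensity fun t => ENNReal.ofReal (f t)),
      v ∈ Set.Icc 0 h := by
  rw [ae_iff]
  have hms : MeasurableSet {v : ℝ | ¬ v ∈ Set.Icc 0 h} := by
    have : {v : ℝ | ¬ v ∈ Set.Icc 0 h} = (Set.Icc 0 h)ᶜ := rfl
    rw [this]
    exact measurableSet_Icc.compl
  rw [withDensity_apply _ hms]
  calc ∫⁻ t in {v : ℝ | ¬ v ∈ Set.Icc 0 h}, ENNReal.ofReal (f t) ∂volume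
      = ∫⁻ t in {v : ℝ | ¬ v ∈ Set.Icc 0 h}, 0 ∂volume := by
        refine setLIntegral_congr_fun hms (fun t ht => ?_)
        rw [hfsupp t ht]
        simp
  _ = 0 := lintegral_zero

lemma density_atom (f : ℝ → ℝ) (a : ℝ) :
    (MeasureTheory.volume.withDensity fun t => ENNReal.ofReal (f t)) {a} = 0 := by
  rw [withDensity_apply _ (measurableSet_singleton a),
    Measure.restrict_eq_zero.mpr (by simp)]
  exact lintegral_zero_measure _

lemma nice_base {k : ℕ} (μ : Fin k → Measure ℝ) :
    NiceG (hHatAux μ 0) (fun _ => (0:ℝ)) := by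
  constructor
  · exact monotone_const
  · exact concaveOn_const 0 (convex_Ici 0)
  · intro z hz
    show (if 0 ≤ z then (0 : EReal) else ⊥) = _
    rw [if_pos hz]
    simp
  · intro z hz
    show (if 0 ≤ z then (0 : EReal) else ⊥) = ⊥
    rw [if_neg (not_le.2 hz)]

lemma nice_hHatAux {k : ℕ} (h : Fin k → ℝ) (hh : ∀ i, 0 ≤ h i)
    (μ : Fin k → Measure ℝ)
    (hconc : ∀ i, ∀ᵐ v ∂(μ i), v ∈ Set.Icc 0 (h i))
    (hatom : ∀ (i : Fin k) (a : ℝ), (μ i) {a} = 0)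
    (hprob : ∀ i, IsProbabilityMeasure (μ i)) :
    ∀ m, m ≤ k → ∃ G, NiceG (hHatAux μ m) G := by
  intro m
  induction m with
  | zero => exact fun _ => ⟨fun _ => (0:ℝ), nice_base μ⟩
  | succ n ih =>
    intro hmk
    obtain ⟨G, hG⟩ := ih (by omega)
    have hn : n < k := by omega
    have hkn : k - (n+1) < k := by omega
    have hunf : hHatAux μ (n+1)
        = hStep (μ ⟨k - (n+1), hkn⟩) (hHatAux μ n) := by
      funext c
      simp only [hHatAux]
      rw [dif_pos hn]
    haveI := hprob ⟨k - (n+1), hkn⟩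
    have hnice := nice_hStep hG (hconc ⟨k - (n+1), hkn⟩) (hh ⟨k - (n+1), hkn⟩)
      (hatom ⟨k - (n+1), hkn⟩)
    rw [← hunf] at hnice
    exact ⟨_, hnice⟩

end Stmt9x

open Stmt9 Stmt9x in
/-- **Lemma 3.10** (the tradeoff recursion is optimized by constant
mechanisms, and reduces to a one-dimensional optimization over `Y ∈ [0,1]`). -/
theorem stmt_9 {k : ℕ} (h : Fin k → ℝ) (hh : ∀ i, 0 ≤ h i)
    (f : Fin k → ℝ → ℝ) (hf : ∀ i t, 0 ≤ f i t)
    (hfsupp : ∀ i t, t ∉ Set.Icc 0 (h i) → f i t = 0)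
    (μ : Fin k → Measure ℝ)
    (hμ : ∀ i, μ i = MeasureTheory.volume.withDensity (fun t => ENNReal.ofReal (f i t)))
    (hprob : ∀ i, IsProbabilityMeasure (μ i)) :
    ∀ (i : Fin k) (c : ℝ),
      (∃ Y ∈ Set.Icc (0 : ℝ) 1,
        (∫ v, (v * Y - (Y * (∫ v, v ∂(μ i)) - c)) ∂(μ i)) = c ∧
        hObj (μ i) (hHat μ ((i : ℕ) + 1)) c
            (fun _ => Y) (fun _ => Y * (∫ v, v ∂(μ i)) - c)
          = hHat μ (i : ℕ) c)
      ∧ hHat μ (i : ℕ) c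
          = sSup {r : EReal | ∃ Y ∈ Set.Icc (0 : ℝ) 1,
              r = eExp (μ i)
                    (fun v => hHat μ ((i : ℕ) + 1) (Y * (v - ∫ v, v ∂(μ i)) + c))
                  + ((Y * ∫ v, v ∂(μ i) : ℝ) : EReal)} := by
  intro i c
  have hconc : ∀ j : Fin k, ∀ᵐ v ∂(μ j), v ∈ Set.Icc 0 (h j) := fun j => by
    rw [hμ j]
    exact density_conc (f j) (h j) (fun t => hfsupp j t)
  have hatom : ∀ (j : Fin k) (a : ℝ), (μ j) {a} = 0 := fun j a => by
    rw [hμ j]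
    exact density_atom _ a
  haveI hpi : IsProbabilityMeasure (μ i) := hprob i
  have hik : (i : ℕ) < k := i.isLt
  have hfin : (⟨k - (k - ((i:ℕ)+1) + 1), by omega⟩ : Fin k) = i := by
    apply Fin.ext
    simp only []
    omega
  have hrec : hHat μ (i : ℕ) = fun c' => hStep (μ i) (hHat μ ((i:ℕ)+1)) c' := by
    have h1 : k - (i : ℕ) = (k - ((i:ℕ)+1)) + 1 := by omega
    rw [hHat, h1]
    funext c'
    simp only [hHatAux]
    rw [dif_pos (show k - ((i:ℕ)+1) < k by omega), hfin]
    rfl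
  obtain ⟨G, hG⟩ := nice_hHatAux h hh μ hconc hatom hprob (k - ((i:ℕ)+1)) (by omega)
  have hG' : NiceG (hHat μ ((i:ℕ)+1)) G := hG
  obtain ⟨hpart1, hpart2⟩ := step_main (ν := μ i) hG' (hconc i) (hh i) (hatom i) c
  constructor
  · obtain ⟨Y, hY, hint, hobj⟩ := hpart1
    exact ⟨Y, hY, hint, by rw [hobj, hrec]⟩
  · rw [hrec]
    exact hpart2
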